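/- Let n ≥ 1, 0 < α < 2, and let ρ : ℝⁿ → [0, ∞) be a continuous 2π-periodic function with mass M = ∫_{[0,2π)ⁿ} ρ(x) dx. Let x⁺ ∈ ℝⁿ be a point where ρ attains its global maximum ρ⁺ = ρ(x⁺). Then for every radius 0 < r ≤ π the (possibly infinite) integral of the nonnegative function z ↦ (ρ⁺ − ρ(x⁺ + z))·|z|^{−(n+α)} over ℝⁿ satisfies ∫_{ℝⁿ} (ρ⁺ − ρ(x⁺ + z))·|z|^{−(n+α)} dz ≥ r^{−(n+α)}·(Vₙ(r)·ρ⁺ − M), where Vₙ(r) denotes the Lebesgue volume of the n-dimensional ball of radius r. -/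

import Mathlib

open MeasureTheory

open Set Submodule Pointwise

section Aux

variable {n : ℕ}

noncomputable def dlbBasis (n : ℕ) : Module.Basis (Fin n) ℝ (EuclideanSpace ℝ (Fin n)) :=
  (PiLp.basisFun 2 ℝ (Fin n)).unitsSMul fun _ => Units.mk0 (2 * Real.pi)
    (by positivity)

lemma dlbBasis_repr (x : EuclideanSpace ℝ (Fin n)) (i : Fin n) :
    (dlbBasis n).repr x i = (2 * Real.pi)⁻¹ * x i := by
  rw [dlbBasis, Module.Basis.repr_unitsSMul]
  simp [Units.smul_def]

lemma dlb_abs_coord_le (x : EuclideanSpace ℝ (Fin n)) (i : Fin n) : |x i| ≤ ‖x‖ := by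
  rw [EuclideanSpace.norm_eq, ← Real.sqrt_sq_eq_abs]
  apply Real.sqrt_le_sqrt
  calc x i ^ 2 ≤ ∑ j, ‖x j‖ ^ 2 := by
        refine Finset.single_le_sum (f := fun j => ‖x j‖ ^ 2) (fun _ _ => by positivity)
          (Finset.mem_univ i) |>.trans_eq' ?_
        simp [sq_abs]

lemma dlb_fd_eq : ZSpan.fundamentalDomain (dlbBasis n)
    = {y : EuclideanSpace ℝ (Fin n) | ∀ i, y i ∈ Set.Ico 0 (2 * Real.pi)} := by
  have h2π : (0:ℝ) < 2 * Real.pi := by positivity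
  ext y
  simp only [ZSpan.mem_fundamentalDomain, dlbBasis_repr, Set.mem_setOf_eq, Set.mem_Ico]
  refine forall_congr' fun i => ?_
  rw [inv_mul_eq_div, div_nonneg_iff, div_lt_one h2π]
  constructor
  · rintro ⟨h1, h2⟩
    refine ⟨?_, h2⟩
    rcases h1 with ⟨h, _⟩ | ⟨h, h'⟩
    · exact h
    · linarith
  · rintro ⟨h1, h2⟩
    exact ⟨Or.inl ⟨h1, h2π.le⟩, h2⟩

lemma dlb_mem_span (g : EuclideanSpace ℝ (Fin n))
    (hg : g ∈ span ℤ (Set.range (dlbBasis n))) :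
    ∃ k : Fin n → ℤ, g = (WithLp.equiv 2 (Fin n → ℝ)).symm (fun i => 2 * Real.pi * (k i)) := by
  have h := (Module.Basis.mem_span_iff_repr_mem ℤ (dlbBasis n) g).mp hg
  choose k hk using h
  refine ⟨k, ?_⟩
  have h2π : (2 * Real.pi) ≠ 0 := by positivity
  ext i
  have := hk i
  rw [dlbBasis_repr] at this
  have : g i = 2 * Real.pi * (k i) := by
    simp only [eq_intCast] at this
    field_simp at this ⊢
    linarith [this]
  simpa using this

end Aux


set_option maxHeartbeats 800000 in
/-- Dissipation lower bound at a maximum point: if `ρ ≥ 0` is continuous, `2π`-periodic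
on `ℝⁿ` with mass `M`, attaining its global maximum `ρ⁺` at `x⁺`, then for `0 < r ≤ π`,
`∫_{ℝⁿ} (ρ⁺ − ρ(x⁺+z))·|z|^{−(n+α)} dz ≥ r^{−(n+α)}·(Vₙ(r)·ρ⁺ − M)`,
where `Vₙ(r)` is the volume of the `n`-dimensional ball of radius `r`. -/
theorem dissipation_lower_bound_at_max (n : ℕ) (hn : 1 ≤ n) (α : ℝ) (hα : 0 < α) (hα2 : α < 2)
    (ρ : EuclideanSpace ℝ (Fin n) → ℝ) (hcont : Continuous ρ) (hnonneg : ∀ x, 0 ≤ ρ x)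
    (hper : ∀ (x : EuclideanSpace ℝ (Fin n)) (k : Fin n → ℤ),
      ρ (x + (WithLp.equiv 2 (Fin n → ℝ)).symm (fun i => 2 * Real.pi * (k i))) = ρ x)
    (M : ℝ)
    (hM : M = ∫ y in {y : EuclideanSpace ℝ (Fin n) | ∀ i, y i ∈ Set.Ico 0 (2 * Real.pi)}, ρ y)
    (xp : EuclideanSpace ℝ (Fin n)) (hmax : ∀ x, ρ x ≤ ρ xp)
    (r : ℝ) (hr : 0 < r) (hrpi : r ≤ Real.pi) :
    ENNReal.ofReal (r ^ (-((n : ℝ) + α)) *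
        ((volume (Metric.ball (0 : EuclideanSpace ℝ (Fin n)) r)).toReal * ρ xp - M)) ≤
      ∫⁻ z, ENNReal.ofReal ((ρ xp - ρ (xp + z)) * ‖z‖ ^ (-((n : ℝ) + α))) := by
  set p : ℝ := (n : ℝ) + α with hp
  have hppos : 0 < p := by positivity
  set L := span ℤ (Set.range (dlbBasis n)) with hL
  set cube : Set (EuclideanSpace ℝ (Fin n)) :=
    {y | ∀ i, y i ∈ Set.Ico 0 (2 * Real.pi)} with hcube
  -- invariance of ρ under the lattice
  have hinv : ∀ (g : L) (x : EuclideanSpace ℝ (Fin n)), ρ ((g : _) +ᵥ x) = ρ x := by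
    rintro ⟨g, hg⟩ x
    obtain ⟨k, rfl⟩ := dlb_mem_span g hg
    show ρ (_ + x) = ρ x
    rw [add_comm]
    exact hper x k
  -- fundamental domains
  have hfd0 : IsAddFundamentalDomain L cube volume := by
    rw [hcube, ← dlb_fd_eq]
    exact ZSpan.isAddFundamentalDomain (dlbBasis n) volume
  set c : EuclideanSpace ℝ (Fin n) :=
    xp - (WithLp.equiv 2 (Fin n → ℝ)).symm (fun _ => Real.pi) with hc
  haveI : VAddCommClass (EuclideanSpace ℝ (Fin n)) L (EuclideanSpace ℝ (Fin n)) :=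
    ⟨fun a b x => by
      show a + ((b : EuclideanSpace ℝ (Fin n)) + x) = (b : EuclideanSpace ℝ (Fin n)) + (a + x)
      exact add_left_comm a b x⟩
  have hfdc : IsAddFundamentalDomain L (c +ᵥ cube) volume := hfd0.vadd_of_comm c
  -- ball ⊆ translated cube
  have hball : Metric.ball xp r ⊆ c +ᵥ cube := by
    intro y hy
    rw [Set.mem_vadd_set_iff_neg_vadd_mem]
    intro i
    have h1 : |(y - xp) i| ≤ ‖y - xp‖ := dlb_abs_coord_le _ i
    have h2 : ‖y - xp‖ < Real.pi := by
      have := Metric.mem_ball.mp hy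
      rw [dist_eq_norm] at this
      linarith
    have habs := abs_lt.mp (lt_of_le_of_lt h1 h2)
    have hcoord : (-c +ᵥ y) i = y i - xp i + Real.pi := by
      simp [hc, vadd_eq_add]
      ring
    have hsubc : (y - xp) i = y i - xp i := by simp
    rw [hsubc] at habs
    rw [hcoord]
    constructor
    · linarith [habs.1]
    · linarith [habs.2]
  -- integral over translated cube = M
  have hMeq : ∫ y in (c +ᵥ cube), ρ y = M := by
    rw [hM]
    have : Countable L := inferInstance
    have : MeasurableVAdd L (EuclideanSpace ℝ (Fin n)) :=
      (inferInstance : MeasurableVAdd L.toAddSubgroup (EuclideanSpace ℝ (Fin n)))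
    have : VAddInvariantMeasure L (EuclideanSpace ℝ (Fin n)) volume :=
      (inferInstance : VAddInvariantMeasure L.toAddSubgroup (EuclideanSpace ℝ (Fin n)) volume)
    exact hfdc.setIntegral_eq hfd0 hinv
  -- integrability on the translated cube
  have hbounded : Bornology.IsBounded (c +ᵥ cube) := by
    have : Bornology.IsBounded cube := by
      rw [hcube, ← dlb_fd_eq]
      exact ZSpan.fundamentalDomain_isBounded (dlbBasis n)
    simpa using this.vadd c
  obtain ⟨R, hR⟩ := hbounded.subset_closedBall (0 : EuclideanSpace ℝ (Fin n))
  have hintc : IntegrableOn ρ (c +ᵥ cube) :=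
    ((hcont.continuousOn.integrableOn_compact (isCompact_closedBall _ R)).mono_set hR)
  -- ∫ over ball xp r ≤ M
  have hkey : ∫ y in Metric.ball xp r, ρ y ≤ M := by
    rw [← hMeq]
    exact setIntegral_mono_set hintc (ae_of_all _ hnonneg)
      (HasSubset.Subset.eventuallyLE hball)
  -- translation
  have htrans : ∫ z in Metric.ball (0 : EuclideanSpace ℝ (Fin n)) r, ρ (xp + z)
      = ∫ y in Metric.ball xp r, ρ y := by
    have hmp : MeasurePreserving (fun z : EuclideanSpace ℝ (Fin n) => xp + z) volume volume :=
      measurePreserving_add_left volume xp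
    have hemb : MeasurableEmbedding (fun z : EuclideanSpace ℝ (Fin n) => xp + z) :=
      measurableEmbedding_addLeft xp
    have := hmp.setIntegral_preimage_emb hemb ρ (Metric.ball xp r)
    rw [← this]
    congr 1
    ext z
    simp [Metric.mem_ball, dist_eq_norm]
  have hint1 : IntegrableOn (fun z => ρ (xp + z))
      (Metric.ball (0 : EuclideanSpace ℝ (Fin n)) r) := by
    have : Continuous fun z : EuclideanSpace ℝ (Fin n) => ρ (xp + z) :=
      hcont.comp (continuous_const.add continuous_id)
    exact (this.continuousOn.integrableOn_compact (isCompact_closedBall _ r)).mono_set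
      Metric.ball_subset_closedBall
  have hVfin : volume (Metric.ball (0 : EuclideanSpace ℝ (Fin n)) r) < ⊤ :=
    measure_ball_lt_top
  have hsubint : IntegrableOn (fun z => ρ xp - ρ (xp + z))
      (Metric.ball (0 : EuclideanSpace ℝ (Fin n)) r) :=
    (integrableOn_const hVfin.ne).sub hint1
  have hrpow : (0:ℝ) ≤ r ^ (-p) := Real.rpow_nonneg hr.le _
  calc ENNReal.ofReal (r ^ (-p) * ((volume (Metric.ball (0 : EuclideanSpace ℝ (Fin n)) r)).toReal * ρ xp - M))
      ≤ ENNReal.ofReal (∫ z in Metric.ball (0 : EuclideanSpace ℝ (Fin n)) r,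
          (ρ xp - ρ (xp + z)) * r ^ (-p)) := by
        apply ENNReal.ofReal_le_ofReal
        rw [integral_mul_const, integral_sub (integrableOn_const hVfin.ne).integrable hint1,
          setIntegral_const, smul_eq_mul, htrans, measureReal_def]
        rw [mul_comm (r ^ (-p))]
        apply mul_le_mul_of_nonneg_right _ hrpow
        linarith [hkey]
    _ = ∫⁻ z in Metric.ball (0 : EuclideanSpace ℝ (Fin n)) r,
          ENNReal.ofReal ((ρ xp - ρ (xp + z)) * r ^ (-p)) := by
        apply ofReal_integral_eq_lintegral_ofReal (hsubint.mul_const _)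
        refine ae_of_all _ fun z => ?_
        have := hmax (xp + z)
        exact mul_nonneg (by linarith) hrpow
    _ ≤ ∫⁻ z in Metric.ball (0 : EuclideanSpace ℝ (Fin n)) r,
          ENNReal.ofReal ((ρ xp - ρ (xp + z)) * ‖z‖ ^ (-p)) := by
        apply setLIntegral_mono
        · exact ((measurable_const.sub
            ((hcont.comp (continuous_const.add continuous_id)).measurable)).mul
            (measurable_norm.pow measurable_const)).ennreal_ofReal
        · intro z hz
          by_cases hz0 : z = 0
          · subst hz0
            simp
          · apply ENNReal.ofReal_le_ofReal
            apply mul_le_mul_of_nonneg_left _ (by linarith [hmax (xp + z)])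
            exact Real.rpow_le_rpow_of_nonpos (norm_pos_iff.mpr hz0)
              (le_of_lt (by simpa [Metric.mem_ball, dist_eq_norm] using hz))
              (by linarith)
    _ ≤ ∫⁻ z, ENNReal.ofReal ((ρ xp - ρ (xp + z)) * ‖z‖ ^ (-p)) :=
        setLIntegral_le_lintegral _ _
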